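/- Let M be a metric space, let I be a nonempty countable index set, and let (x_i, y_i)_{i∈I} be pairs of distinct points of M. Then the following are equivalent: (i) there exists f : M → ℝ which is 1-Lipschitz and satisfies f(x_i) − f(y_i) = d(x_i, y_i) for every i ∈ I; (ii) the family (x_i, y_i)_{i∈I} is cyclically monotone, i.e. for every finite sequence of indices i_1, …, i_m in I one has d(x_{i_1},y_{i_1}) + d(x_{i_2},y_{i_2}) + ⋯ + d(x_{i_m},y_{i_m}) ≤ d(x_{i_1},y_{i_2}) + d(x_{i_2},y_{i_3}) + ⋯ + d(x_{i_{m-1}},y_{i_m}) + d(x_{i_m},y_{i_1}). -/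

import Mathlib

section Aux

variable {M : Type*} [MetricSpace M] {I : Type*}

/-- Value of a chain: `chainVal x y i₀ p L` realizes the cost of going from `p` through the
pairs indexed by `L`, ending at the anchor `x i₀`. -/
noncomputable def chainVal (x y : I → M) (i₀ : I) : M → List I → ℝ
  | p, [] => dist p (x i₀)
  | p, j :: L => dist p (y j) - dist (x j) (y j) + chainVal x y i₀ (x j) L

/-- Sum of transition costs along a path starting at `a`. -/
noncomputable def pathSum (x y : I → M) : I → List I → ℝ
  | _, [] => 0
  | a, b :: t => dist (x a) (y b) + pathSum x y b t

/-- Last element of `a :: L`. -/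
def lastI : I → List I → I
  | a, [] => a
  | _, b :: t => lastI b t

lemma lastI_cons (a b : I) (t : List I) : lastI a (b :: t) = lastI b t := rfl

lemma sum_getD_map (g : I → ℝ) (d : I) :
    ∀ K : List I, ∑ r ∈ Finset.range K.length, g (K.getD r d) = (K.map g).sum := by
  intro K
  induction K with
  | nil => simp
  | cons a t ih =>
    rw [List.length_cons, Finset.sum_range_succ']
    simp only [List.getD_cons_succ, List.getD_cons_zero, List.map_cons, List.sum_cons, ih]
    ring

lemma sum_path (x y : I → M) (d : I) :
    ∀ (L : List I) (a : I), (∑ r ∈ Finset.range L.length,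
      dist (x ((a :: L).getD r d)) (y ((a :: L).getD (r + 1) d))) = pathSum x y a L := by
  intro L
  induction L with
  | nil => simp [pathSum]
  | cons b t ih =>
    intro a
    rw [List.length_cons, Finset.sum_range_succ']
    simp only [List.getD_cons_succ, List.getD_cons_zero]
    have ih' := ih b
    simp only [List.getD_cons_succ] at ih'
    rw [ih']
    simp [pathSum]
    ring

lemma getD_last (d : I) : ∀ (L : List I) (a : I), (a :: L).getD L.length d = lastI a L := by
  intro L
  induction L with
  | nil => intro a; simp [lastI]
  | cons b t ih => intro a; simpa [lastI_cons] using ih b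

lemma chainVal_closed (x y : I → M) (i₀ : I) :
    ∀ (L : List I) (a : I), chainVal x y i₀ (x a) L =
      pathSum x y a L - (L.map (fun j => dist (x j) (y j))).sum + dist (x (lastI a L)) (x i₀) := by
  intro L
  induction L with
  | nil => intro a; simp [chainVal, pathSum, lastI]
  | cons b t ih =>
    intro a
    rw [chainVal, ih b]
    simp [pathSum, lastI_cons]
    ring

lemma chainVal_le (x y : I → M) (i₀ : I) :
    ∀ (L : List I) (p q : M), chainVal x y i₀ p L ≤ chainVal x y i₀ q L + dist p q := by
  intro L p q
  cases L with
  | nil =>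
    simp only [chainVal]
    have := dist_triangle p q (x i₀)
    linarith [dist_comm p q ▸ this]
  | cons j t =>
    simp only [chainVal]
    have := dist_triangle p q (y j)
    linarith

end Aux

/-- Theorem 2.6 (i)⇔(iv) of the paper: a family of pairs of distinct points is simultaneously
normed by a single 1-Lipschitz real function iff it is cyclically monotone. -/
theorem stmt_5 {M : Type*} [MetricSpace M] {I : Type*} [Nonempty I] [Countable I]
    (x y : I → M) (hxy : ∀ i : I, x i ≠ y i) :
    (∃ f : M → ℝ, LipschitzWith 1 f ∧ ∀ i : I, f (x i) - f (y i) = dist (x i) (y i)) ↔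
    (∀ m : ℕ, 1 ≤ m → ∀ i : ℕ → I,
      ∑ r ∈ Finset.range m, dist (x (i r)) (y (i r)) ≤
        ∑ r ∈ Finset.range m, dist (x (i r)) (y (i ((r + 1) % m)))) := by
  constructor
  · rintro ⟨f, hf, hfd⟩ m hm i
    have hm0 : 0 < m := hm
    have hsub : ∀ p q : M, f p - f q ≤ dist p q := by
      intro p q
      calc f p - f q ≤ |f p - f q| := le_abs_self _
        _ = dist (f p) (f q) := (Real.dist_eq _ _).symm
        _ ≤ 1 * dist p q := hf.dist_le_mul p q
        _ = dist p q := one_mul _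
    have hperm : (∑ r ∈ Finset.range m, f (y (i ((r + 1) % m)))) =
        ∑ r ∈ Finset.range m, f (y (i r)) := by
      apply Finset.sum_nbij' (i := fun r => (r + 1) % m) (j := fun r => (r + (m - 1)) % m)
      · intro a _; exact Finset.mem_range.mpr (Nat.mod_lt _ hm0)
      · intro a _; exact Finset.mem_range.mpr (Nat.mod_lt _ hm0)
      · intro a ha
        have ha' : a < m := Finset.mem_range.mp ha
        rw [Nat.mod_add_mod]
        have : a + 1 + (m - 1) = a + m := by omega
        rw [this, Nat.add_mod_right, Nat.mod_eq_of_lt ha']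
      · intro a ha
        have ha' : a < m := Finset.mem_range.mp ha
        rw [Nat.mod_add_mod]
        have : a + (m - 1) + 1 = a + m := by omega
        rw [this, Nat.add_mod_right, Nat.mod_eq_of_lt ha']
      · intro a _; rfl
    calc ∑ r ∈ Finset.range m, dist (x (i r)) (y (i r))
        = ∑ r ∈ Finset.range m, (f (x (i r)) - f (y (i r))) := by
          refine Finset.sum_congr rfl fun r _ => (hfd (i r)).symm
      _ = (∑ r ∈ Finset.range m, f (x (i r))) - ∑ r ∈ Finset.range m, f (y (i r)) :=
          Finset.sum_sub_distrib _ _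
      _ = (∑ r ∈ Finset.range m, f (x (i r))) -
            ∑ r ∈ Finset.range m, f (y (i ((r + 1) % m))) := by rw [hperm]
      _ = ∑ r ∈ Finset.range m, (f (x (i r)) - f (y (i ((r + 1) % m)))) :=
          (Finset.sum_sub_distrib _ _).symm
      _ ≤ ∑ r ∈ Finset.range m, dist (x (i r)) (y (i ((r + 1) % m))) :=
          Finset.sum_le_sum fun r _ => hsub _ _
  · intro H
    obtain ⟨i₀⟩ := ‹Nonempty I›
    -- lower bound on chain values, from cyclic monotonicity
    have lb : ∀ (L : List I) (p : M), -dist p (x i₀) ≤ chainVal x y i₀ p L := by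
      intro L p
      cases L with
      | nil =>
        simp only [chainVal]
        linarith [dist_nonneg (x := p) (y := x i₀)]
      | cons j L' =>
        set K : List I := i₀ :: j :: L' with hK
        have hHm := H (K.length) (by simp [hK]) (fun r => K.getD r i₀)
        -- rewrite LHS of hHm
        have hL : (∑ r ∈ Finset.range K.length, dist (x (K.getD r i₀)) (y (K.getD r i₀)))
            = (K.map (fun k => dist (x k) (y k))).sum := by
          simpa using sum_getD_map (fun k => dist (x k) (y k)) i₀ K
        -- rewrite RHS of hHm: split off the last term
        have hKlen : K.length = (j :: L').length + 1 := rfl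
        have hR : (∑ r ∈ Finset.range K.length,
            dist (x (K.getD r i₀)) (y (K.getD ((r + 1) % K.length) i₀)))
            = pathSum x y i₀ (j :: L') + dist (x (lastI i₀ (j :: L'))) (y i₀) := by
          rw [hKlen, Finset.sum_range_succ]
          have h1 : ∀ r ∈ Finset.range (j :: L').length,
              dist (x (K.getD r i₀)) (y (K.getD ((r + 1) % ((j :: L').length + 1)) i₀)) =
              dist (x (K.getD r i₀)) (y (K.getD (r + 1) i₀)) := by
            intro r hr
            have hr' : r < (j :: L').length := Finset.mem_range.mp hr
            rw [Nat.mod_eq_of_lt (by omega : r + 1 < (j :: L').length + 1)]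
          rw [Finset.sum_congr rfl h1, sum_path x y i₀ (j :: L') i₀]
          congr 1
          rw [Nat.mod_self]
          have h3 : K.getD (j :: L').length i₀ = lastI i₀ (j :: L') :=
            getD_last i₀ (j :: L') i₀
          rw [h3]
          rfl
        rw [hL, hR] at hHm
        have hmap : (K.map (fun k => dist (x k) (y k))).sum =
            dist (x i₀) (y i₀) + dist (x j) (y j) +
              ((L'.map (fun k => dist (x k) (y k))).sum) := by
          simp [hK]; ring
        have hps : pathSum x y i₀ (j :: L') = dist (x i₀) (y j) + pathSum x y j L' := rfl
        have hlast : lastI i₀ (j :: L') = lastI j L' := rfl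
        have hcv : chainVal x y i₀ p (j :: L') =
            dist p (y j) - dist (x j) (y j) +
              (pathSum x y j L' - (L'.map (fun k => dist (x k) (y k))).sum +
                dist (x (lastI j L')) (x i₀)) := by
          rw [chainVal, chainVal_closed]
        rw [hmap, hps, hlast] at hHm
        have t1 : dist (x i₀) (y j) ≤ dist (x i₀) p + dist p (y j) := dist_triangle _ _ _
        have t2 : dist (x (lastI j L')) (y i₀) ≤
            dist (x (lastI j L')) (x i₀) + dist (x i₀) (y i₀) := dist_triangle _ _ _
        rw [hcv]
        have := dist_comm p (x i₀)
        linarith [dist_comm (x i₀) p]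
    -- the norming function
    set S : M → Set ℝ := fun p => Set.range (chainVal x y i₀ p) with hS
    have hne : ∀ p, (S p).Nonempty := fun p => ⟨_, ⟨[], rfl⟩⟩
    have hbdd : ∀ p, BddBelow (S p) := by
      rintro p
      exact ⟨-dist p (x i₀), by rintro v ⟨L, rfl⟩; exact lb L p⟩
    set f : M → ℝ := fun p => sInf (S p) with hf
    have hfle : ∀ p L, f p ≤ chainVal x y i₀ p L := fun p L => csInf_le (hbdd p) ⟨L, rfl⟩
    refine ⟨f, ?_, ?_⟩
    · apply LipschitzWith.of_dist_le_mul
      intro p q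
      rw [NNReal.coe_one, one_mul, Real.dist_eq, abs_sub_le_iff]
      constructor
      · have : f p ≤ f q + dist p q := by
          rw [hf]
          have : sInf (S p) - dist p q ≤ sInf (S q) := by
            apply le_csInf (hne q)
            rintro v ⟨L, rfl⟩
            have := chainVal_le x y i₀ L p q
            have := hfle p L
            linarith
          linarith
        linarith
      · have : f q ≤ f p + dist p q := by
          rw [hf]
          have : sInf (S q) - dist p q ≤ sInf (S p) := by
            apply le_csInf (hne p)
            rintro v ⟨L, rfl⟩
            have h1 := chainVal_le x y i₀ L q p
            have := hfle q L
            rw [dist_comm q p] at h1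
            linarith
          linarith
        linarith
    · intro j
      have hge : f (x j) - f (y j) ≥ dist (x j) (y j) := by
        have : f (y j) + dist (x j) (y j) ≤ f (x j) := by
          apply le_csInf (hne (x j))
          rintro v ⟨L, rfl⟩
          have h1 : f (y j) ≤ chainVal x y i₀ (y j) (j :: L) := hfle (y j) (j :: L)
          have h2 : chainVal x y i₀ (y j) (j :: L) =
              dist (y j) (y j) - dist (x j) (y j) + chainVal x y i₀ (x j) L := rfl
          rw [h2, dist_self] at h1
          linarith
        linarith
      have hle : f (x j) - f (y j) ≤ dist (x j) (y j) := by
        have h1 : f (x j) ≤ f (y j) + dist (x j) (y j) := by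
          rw [hf]
          have : sInf (S (x j)) - dist (x j) (y j) ≤ sInf (S (y j)) := by
            apply le_csInf (hne (y j))
            rintro v ⟨L, rfl⟩
            have := chainVal_le x y i₀ L (x j) (y j)
            have := hfle (x j) L
            linarith
          linarith
        linarith
      linarith
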